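/- Co-SimRank and Li et al.'s SimRank are proportional: if S solves S = C·Q S Q^T + (1−C)·I_n and S̃ solves S̃ = C·Q S̃ Q^T + I_n (both with C ∈ (0,1) and ‖Q‖ ≤ 1), then S = (1−C)·S̃. Consequently the two similarity measures induce identical rankings of node pairs. -/

import Mathlib

open Matrix
open scoped Matrix.Norms.L2Operator

/-- Li et al.'s SimRank `S` (solving `S = C Q S Qᵀ + (1-C) I`) and Co-SimRank
`S̃` (solving `S̃ = C Q S̃ Qᵀ + I`) are proportional: `S = (1-C)·S̃`; consequently the two
measures induce identical rankings of node pairs. -/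
theorem simrank_cosimrank_proportional {n : ℕ} (C : ℝ) (hC0 : 0 < C) (hC1 : C < 1)
    (Q S St : Matrix (Fin n) (Fin n) ℝ) (hQ : ‖Q‖ ≤ 1)
    (hS : S = C • (Q * S * Qᵀ) + (1 - C) • (1 : Matrix (Fin n) (Fin n) ℝ))
    (hSt : St = C • (Q * St * Qᵀ) + (1 : Matrix (Fin n) (Fin n) ℝ)) :
    S = (1 - C) • St ∧
    ∀ a b c d : Fin n, S a b ≤ S c d ↔ St a b ≤ St c d := by
  set D := S - (1 - C) • St with hD
  have hQn : (0:ℝ) ≤ ‖Q‖ := norm_nonneg _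
  have hDeq : D = C • (Q * D * Qᵀ) := by
    rw [hD]
    nth_rewrite 1 [hS, hSt]
    simp only [Matrix.mul_sub, Matrix.sub_mul, Matrix.mul_smul, Matrix.smul_mul,
      smul_add, smul_smul]
    module
  have hQt : ‖Qᵀ‖ = ‖Q‖ := by
    rw [← Q.conjTranspose_eq_transpose_of_trivial]
    exact Q.l2_opNorm_conjTranspose
  have hnorm : ‖D‖ ≤ C * ‖D‖ := by
    calc ‖D‖ = ‖C • (Q * D * Qᵀ)‖ := by rw [← hDeq]
    _ = C * ‖Q * D * Qᵀ‖ := by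
        rw [norm_smul, Real.norm_eq_abs, abs_of_pos hC0]
    _ ≤ C * (‖Q * D‖ * ‖Qᵀ‖) := by
        exact mul_le_mul_of_nonneg_left (Matrix.l2_opNorm_mul _ _) hC0.le
    _ ≤ C * (‖Q‖ * ‖D‖ * ‖Qᵀ‖) := by
        gcongr
        exact Matrix.l2_opNorm_mul _ _
    _ ≤ C * ‖D‖ := by
        rw [hQt]
        have h1 : ‖Q‖ * ‖D‖ * ‖Q‖ ≤ 1 * ‖D‖ * 1 := by
          nlinarith [norm_nonneg D, mul_nonneg hQn (norm_nonneg D)]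
        calc C * (‖Q‖ * ‖D‖ * ‖Q‖) ≤ C * (1 * ‖D‖ * 1) :=
              mul_le_mul_of_nonneg_left h1 hC0.le
          _ = C * ‖D‖ := by ring
  have hD0 : D = 0 := by
    by_contra h
    have : 0 < ‖D‖ := norm_pos_iff.mpr h
    nlinarith
  have hmain : S = (1 - C) • St := by
    have := sub_eq_zero.mp hD0
    exact this
  refine ⟨hmain, fun a b c d => ?_⟩
  have h1C : (0:ℝ) < 1 - C := by linarith
  rw [hmain]
  simp only [Matrix.smul_apply, smul_eq_mul]
  constructor
  · intro h; exact le_of_mul_le_mul_left h h1C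
  · intro h; exact mul_le_mul_of_nonneg_left h h1C.le
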